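/- Let H be a complex Hilbert space, A a bounded linear operator on H with ‖exp(−t•A)‖ ≤ M·e^{−δt} for all t ≥ 0 (M > 0, δ > 0), b ∈ H, and ℓ : H → ℂ a continuous linear functional. Define the scattering function φ(s) = ℓ(exp(−s•A) b) and the operator R_x = ∫_x^∞ exp(−t•A) ∘ (b⊗ℓ) ∘ exp(−t•A) dt (a convergent Bochner integral). Let μ ∈ ℂ and let x ≥ 0 be such that 1 + μ•R_x is invertible in B(H), and set T(x,y) = −ℓ( exp(−x•A) (1 + μ•R_x)⁻¹ exp(−y•A) b ). Then for every y ≥ 0 the integral ∫_x^∞ T(x,z)·φ(z+y) dz converges absolutely and the Gelfand–Levitan equation holds: T(x,y) + φ(x+y) + μ·∫_x^∞ T(x,z)·φ(z+y) dz = 0. -/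

import Mathlib

set_option maxHeartbeats 1000000
set_option synthInstance.maxHeartbeats 400000


open MeasureTheory

/-- The operator `T_μ(x,y) = -ℓ(e^{-xA}(1+μR_x)⁻¹ e^{-yA} b)` solves the Gelfand--Levitan
integral equation `T(x,y) + φ(x+y) + μ ∫_x^∞ T(x,z) φ(z+y) dz = 0`
(Proposition 2.4(i) of the paper, for bounded `A` and rank-one `BC = b ⊗ ℓ`). -/
theorem gelfand_levitan_solution
    {H : Type*} [NormedAddCommGroup H] [InnerProductSpace ℂ H] [CompleteSpace H]
    (A : H →L[ℂ] H) (b : H) (ℓ : H →L[ℂ] ℂ) (M δ : ℝ) (hM : 0 < M) (hδ : 0 < δ)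
    (hA : ∀ t : ℝ, 0 ≤ t → ‖NormedSpace.exp (-(t • A))‖ ≤ M * Real.exp (-δ * t))
    (φ : ℝ → ℂ) (hφ : ∀ s : ℝ, φ s = ℓ (NormedSpace.exp (-(s • A)) b))
    (R : ℝ → (H →L[ℂ] H))
    (hR : ∀ x : ℝ, 0 ≤ x → R x = ∫ t in Set.Ioi x,
      NormedSpace.exp (-(t • A)) * ℓ.smulRight b * NormedSpace.exp (-(t • A)))
    (μ : ℂ) (x : ℝ) (hx : 0 ≤ x) (hinv : IsUnit (1 + μ • R x))
    (T : ℝ → ℂ)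
    (hT : ∀ y : ℝ, T y = -ℓ ((NormedSpace.exp (-(x • A)) * Ring.inverse (1 + μ • R x)
        * NormedSpace.exp (-(y • A))) b)) :
    ∀ y : ℝ, 0 ≤ y →
      MeasureTheory.IntegrableOn (fun z : ℝ => T z * φ (z + y)) (Set.Ioi x) ∧
      T y + φ (x + y) + μ * ∫ z in Set.Ioi x, T z * φ (z + y) = 0 := by
  intro y hy
  -- abbreviations
  set E : ℝ → (H →L[ℂ] H) := fun t => NormedSpace.exp (-(t • A)) with hE
  set K : H →L[ℂ] H := ℓ.smulRight b with hK
  set F : ℝ → (H →L[ℂ] H) := fun t => E t * K * E t with hF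
  have hEadd : ∀ s t : ℝ, E (s + t) = E s * E t := by
    intro s t
    letI : NormedAlgebra ℚ (H →L[ℂ] H) := .restrictScalars ℚ ℂ _
    have hc : Commute (-(s • A)) (-(t • A)) :=
      (((Commute.refl A).smul_left s).smul_right t).neg_left.neg_right
    have : -((s + t) • A) = -(s • A) + -(t • A) := by
      rw [add_smul]; abel
    rw [hE]
    simp only
    rw [this, NormedSpace.exp_add_of_commute hc]
  have hcont : Continuous E := by
    letI : NormedAlgebra ℚ (H →L[ℂ] H) := .restrictScalars ℚ ℂ _
    exact NormedSpace.exp_continuous.comp ((continuous_id.smul continuous_const).neg)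
  -- integrability of F on Ioi x
  have hFint : IntegrableOn F (Set.Ioi x) := by
    have hg : IntegrableOn (fun t : ℝ => (M * ‖K‖ * M) * Real.exp (-(2 * δ) * t))
        (Set.Ioi x) :=
      (exp_neg_integrableOn_Ioi x (by linarith)).const_mul _
    refine Integrable.mono' hg ?_ ?_
    · exact ((hcont.mul continuous_const).mul hcont).aestronglyMeasurable
    · filter_upwards [self_mem_ae_restrict (measurableSet_Ioi : MeasurableSet (Set.Ioi x))]
        with t ht
      have ht0 : (0 : ℝ) ≤ t := le_trans hx (le_of_lt ht)
      have h1 : ‖E t‖ ≤ M * Real.exp (-δ * t) := hA t ht0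
      have hE0 : (0 : ℝ) ≤ ‖E t‖ := norm_nonneg _
      calc ‖F t‖ ≤ ‖E t * K‖ * ‖E t‖ := norm_mul_le _ _
        _ ≤ ‖E t‖ * ‖K‖ * ‖E t‖ := by
            gcongr
            exact norm_mul_le _ _
        _ ≤ (M * Real.exp (-δ * t)) * ‖K‖ * (M * Real.exp (-δ * t)) := by
            gcongr
        _ = (M * ‖K‖ * M) * Real.exp (-(2 * δ) * t) := by
            rw [show -(2 * δ) * t = -δ * t + -δ * t by ring, Real.exp_add]; ring
  have hRx : R x = ∫ t in Set.Ioi x, F t := hR x hx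
  -- the continuous linear functional Φ
  set Q : H →L[ℂ] H := Ring.inverse (1 + μ • R x) with hQdef
  set P : H →L[ℂ] H := E x * Q with hP
  set v : H := E y b with hv
  set Φ : (H →L[ℂ] H) →L[ℂ] ℂ :=
    (ℓ.comp P).comp (ContinuousLinearMap.apply ℂ H v) with hΦ
  have hΦapp : ∀ S : H →L[ℂ] H, Φ S = ℓ (P (S v)) := fun S => rfl
  -- pointwise identity
  have hpt : ∀ t : ℝ, Φ (F t) = -(T t * φ (t + y)) := by
    intro t
    have h1 : F t v = ℓ (E t v) • (E t b) := by
      rw [hF]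
      simp only [ContinuousLinearMap.mul_apply]
      rw [hK, ContinuousLinearMap.smulRight_apply, _root_.map_smul]
    have h2 : T t = -ℓ (P (E t b)) := by
      rw [hT t, hP]
      simp [ContinuousLinearMap.mul_apply]
      rfl
    have h3 : φ (t + y) = ℓ (E t v) := by
      rw [hφ (t + y)]
      have : NormedSpace.exp (-((t + y) • A)) = E (t + y) := rfl
      rw [this, hEadd t y, hv, ContinuousLinearMap.mul_apply]
    rw [hΦapp, h1, ContinuousLinearMap.map_smul, ContinuousLinearMap.map_smul, h2, h3]
    simp
    ring
  -- integrability of the scattering product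
  have hint : IntegrableOn (fun z : ℝ => T z * φ (z + y)) (Set.Ioi x) := by
    have := (Φ.integrable_comp hFint).neg
    refine this.congr ?_
    filter_upwards with t
    simp only [Pi.neg_apply]
    rw [hpt t]; ring
  refine ⟨hint, ?_⟩
  -- compute the integral
  have hInt : (∫ z in Set.Ioi x, T z * φ (z + y)) = -Φ (R x) := by
    have h1 : (∫ t in Set.Ioi x, Φ (F t)) = Φ (∫ t in Set.Ioi x, F t) :=
      ContinuousLinearMap.integral_comp_comm Φ hFint
    have h2 : (∫ z in Set.Ioi x, T z * φ (z + y)) = ∫ t in Set.Ioi x, -(Φ (F t)) := by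
      refine integral_congr_ae ?_
      filter_upwards with t
      rw [hpt t]; ring
    rw [h2, integral_neg, h1, ← hRx]
  rw [hInt]
  -- algebra with the resolvent identity
  have hQ : Q * (1 + μ • R x) = 1 := Ring.inverse_mul_cancel _ hinv
  have key : P + μ • (P * R x) = E x := by
    have h1 : P * (1 + μ • R x) = E x := by
      rw [hP, mul_assoc, hQ, mul_one]
    calc P + μ • (P * R x) = P * (1 + μ • R x) := by
          rw [mul_add, mul_one, mul_smul_comm]
      _ = E x := h1
  have keyv : P v + μ • (P (R x v)) = E x v := by
    have := congrArg (fun S : H →L[ℂ] H => S v) key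
    simpa [ContinuousLinearMap.add_apply, ContinuousLinearMap.smul_apply,
      ContinuousLinearMap.mul_apply] using this
  have keyℓ : ℓ (P v) + μ * ℓ (P (R x v)) = ℓ (E x v) := by
    have := congrArg ℓ keyv
    simpa [map_add, _root_.map_smul, smul_eq_mul] using this
  have hTy : T y = -ℓ (P v) := by
    rw [hT y, hP, hv]
    simp [ContinuousLinearMap.mul_apply]
    rfl
  have hφxy : φ (x + y) = ℓ (E x v) := by
    rw [hφ (x + y)]
    have : NormedSpace.exp (-((x + y) • A)) = E (x + y) := rfl
    rw [this, hEadd x y, hv, ContinuousLinearMap.mul_apply]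
  have hΦR : Φ (R x) = ℓ (P (R x v)) := hΦapp _
  rw [hTy, hφxy, hΦR]
  linear_combination -keyℓ
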